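/- Let A, B ∈ ℝ^{n×n} be symmetric matrices. Then there exist a diagonal matrix Θ = diag(θ₁,…,θₙ) with all θⱼ ≥ 0 and an orthogonal matrix U ∈ ℝ^{2n×2n} whose columns satisfy u_{n+j} = J u_j for all j = 1,…,n (where J = [[0, -Iₙ],[Iₙ, 0]]), such that the symmetric matrix [[A, B],[B, -A]] equals U · diag(Θ, -Θ) · Uᵀ. -/

import Mathlib

open Matrix

open Module RealInnerProductSpace

theorem key : ∀ (d : ℕ) (V : Type) [NormedAddCommGroup V] [InnerProductSpace ℝ V]
    [FiniteDimensional ℝ V] (T Jl : V →ₗ[ℝ] V),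
    finrank ℝ V = d →
    (∀ x y : V, ⟪T x, y⟫ = ⟪x, T y⟫) →
    (∀ x y : V, ⟪Jl x, Jl y⟫ = ⟪x, y⟫) →
    (∀ x, Jl (Jl x) = -x) →
    (∀ x, T (Jl x) = -Jl (T x)) →
    ∃ (k : ℕ) (θ : Fin k → ℝ) (f : Fin k → V),
      d = 2 * k ∧ (∀ i, 0 ≤ θ i) ∧
      Orthonormal ℝ (Sum.elim f (fun i => Jl (f i))) ∧
      (∀ i, T (f i) = θ i • f i) := by
  intro d
  induction d using Nat.strong_induction_on with
  | _ d IH =>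
  intro V _ _ _ T Jl hd hT hJi hJJ hTJ
  rcases Nat.eq_zero_or_pos d with hd0 | hdpos
  · refine ⟨0, Fin.elim0, Fin.elim0, by omega, fun i => i.elim0, ?_, fun i => i.elim0⟩
    rw [orthonormal_iff_ite]
    rintro (i | i) <;> exact i.elim0
  -- skew symmetry of J
  have hskew : ∀ x y : V, ⟪Jl x, y⟫ = -⟪x, Jl y⟫ := by
    intro x y
    have := hJi x (Jl y)
    rw [hJJ y, inner_neg_right] at this
    linarith
  -- find an eigenvector with nonnegative eigenvalue
  have hTs : T.IsSymmetric := hT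
  obtain ⟨u, θ0, hθ0, hu1, hTu⟩ :
      ∃ (u : V) (θ0 : ℝ), 0 ≤ θ0 ∧ ‖u‖ = 1 ∧ T u = θ0 • u := by
    have hfr : finrank ℝ V = d := hd
    let b := hTs.eigenvectorBasis hfr
    let i0 : Fin d := ⟨0, hdpos⟩
    set v := b i0 with hv
    set μ := hTs.eigenvalues hfr i0 with hμ
    have hTv : T v = μ • v := hTs.apply_eigenvectorBasis hfr i0
    have hnv : ‖v‖ = 1 := b.orthonormal.1 i0
    rcases le_or_gt 0 μ with hle | hlt
    · exact ⟨v, μ, hle, hnv, hTv⟩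
    · refine ⟨Jl v, -μ, by linarith, ?_, ?_⟩
      · have : ⟪Jl v, Jl v⟫ = ⟪v, v⟫ := hJi v v
        rw [real_inner_self_eq_norm_sq, real_inner_self_eq_norm_sq, hnv] at this
        nlinarith [norm_nonneg (Jl v)]
      · rw [hTJ v, hTv, Jl.map_smul, neg_smul]
  -- basic inner product facts about u and Jl u
  have huu : ⟪u, u⟫ = 1 := by rw [real_inner_self_eq_norm_sq, hu1]; norm_num
  have hJuJu : ⟪Jl u, Jl u⟫ = 1 := by rw [hJi]; exact huu
  have huJu : ⟪u, Jl u⟫ = 0 := by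
    have h1 := hskew u u
    have h2 := real_inner_comm (Jl u) u
    linarith
  have hJuu : ⟪Jl u, u⟫ = 0 := by rw [real_inner_comm]; exact huJu
  have hTJu : T (Jl u) = (-θ0) • Jl u := by
    rw [hTJ u, hTu, Jl.map_smul, neg_smul]
  -- the orthogonal complement of span {u, Jl u}
  set S : Submodule ℝ V := Submodule.span ℝ {u, Jl u} with hS
  set W := Sᗮ with hWdef
  have memW : ∀ w : V, w ∈ W ↔ (⟪u, w⟫ = 0 ∧ ⟪Jl u, w⟫ = 0) := by
    intro w
    rw [hWdef, Submodule.mem_orthogonal]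
    constructor
    · intro hw
      exact ⟨hw u (Submodule.subset_span (by simp)),
        hw (Jl u) (Submodule.subset_span (by simp))⟩
    · rintro ⟨h1, h2⟩ v hv
      refine Submodule.span_induction ?_ ?_ ?_ ?_ hv
      · rintro x (rfl | rfl)
        · exact h1
        · exact h2
      · exact inner_zero_left w
      · intro x y _ _ hx hy
        rw [inner_add_left, hx, hy, add_zero]
      · intro c x _ hx
        rw [real_inner_smul_left, hx, mul_zero]
  -- dimensions
  have hon2 : Orthonormal ℝ ![u, Jl u] := by
    rw [orthonormal_iff_ite]
    have hnJ : ‖Jl u‖ = 1 := by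
      have := hJuJu
      rw [real_inner_self_eq_norm_sq] at this
      nlinarith [norm_nonneg (Jl u)]
    intro i j
    fin_cases i <;> fin_cases j <;> simp [huu, hJuJu, huJu, hJuu, hnJ, hu1]
  have hrange : Set.range ![u, Jl u] = {u, Jl u} := by
    simp only [Matrix.range_cons, Matrix.range_empty, Set.union_empty, Set.union_singleton]
    exact Set.pair_comm _ _
  have hfS : finrank ℝ S = 2 := by
    rw [hS, ← hrange, finrank_span_eq_card hon2.linearIndependent]
    simp
  have hfW : 2 + finrank ℝ W = d := by
    rw [← hd, ← hfS, hWdef]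
    exact S.finrank_add_finrank_orthogonal
  -- invariance of W
  have hTW : ∀ w ∈ W, T w ∈ W := by
    intro w hw
    rw [memW] at hw ⊢
    obtain ⟨h1, h2⟩ := hw
    constructor
    · rw [← hT, hTu, real_inner_smul_left, h1, mul_zero]
    · rw [← hT, hTJu, real_inner_smul_left, h2, mul_zero]
  have hJW : ∀ w ∈ W, Jl w ∈ W := by
    intro w hw
    rw [memW] at hw ⊢
    obtain ⟨h1, h2⟩ := hw
    constructor
    · have := hskew u w
      have h2' := real_inner_comm (Jl u) w
      linarith
    · rw [hJi]; exact h1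
  -- restricted operators
  set T' : W →ₗ[ℝ] W := T.restrict hTW with hT'def
  set J' : W →ₗ[ℝ] W := Jl.restrict hJW with hJ'def
  have hcoeT : ∀ w : W, (T' w : V) = T (w : V) := fun w => rfl
  have hcoeJ : ∀ w : W, (J' w : V) = Jl (w : V) := fun w => rfl
  -- apply the induction hypothesis
  have hWr : finrank ℝ W < d := by omega
  obtain ⟨k', θ', f', hk', hθ', hon', hTf'⟩ :=
    IH (finrank ℝ W) hWr W T' J' rfl
      (fun x y => by rw [Submodule.coe_inner, Submodule.coe_inner, hcoeT, hcoeT]; exact hT _ _)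
      (fun x y => by rw [Submodule.coe_inner, Submodule.coe_inner, hcoeJ, hcoeJ]; exact hJi _ _)
      (fun x => by
        apply Subtype.ext
        rw [hcoeJ, hcoeJ]
        simpa using hJJ (x : V))
      (fun x => by
        apply Subtype.ext
        rw [hcoeT, hcoeJ]
        simpa [hcoeJ, hcoeT] using hTJ (x : V))
  -- assemble the answer
  set fc : Fin (k' + 1) → V := Fin.cons u (fun i => (f' i : V)) with hfc
  refine ⟨k' + 1, Fin.cons θ0 θ', fc, by omega, ?_, ?_, ?_⟩
  · intro i
    refine Fin.cases ?_ ?_ i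
    · simpa using hθ0
    · intro j; simpa using hθ' j
  · -- orthonormality
    rw [orthonormal_iff_ite] at hon' ⊢
    have c1 : ∀ w : W, ⟪u, (w : V)⟫ = 0 := fun w => ((memW _).1 w.2).1
    have c2 : ∀ w : W, ⟪Jl u, (w : V)⟫ = 0 := fun w => ((memW _).1 w.2).2
    have hF : ∀ i j : Fin (k' + 1),
        ⟪fc i, fc j⟫ = if i = j then (1 : ℝ) else 0 := by
      intro i j
      refine Fin.cases ?_ ?_ i
      · refine Fin.cases ?_ ?_ j
        · simpa [hfc] using huu
        · intro j'
          simp only [hfc, Fin.cons_zero, Fin.cons_succ]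
          rw [c1 (f' j')]
          simp [(Fin.succ_ne_zero j').symm]
      · intro i'
        refine Fin.cases ?_ ?_ j
        · simp only [hfc, Fin.cons_zero, Fin.cons_succ]
          rw [real_inner_comm, c1 (f' i')]
          simp [Fin.succ_ne_zero i']
        · intro j'
          simp only [hfc, Fin.cons_succ]
          have h := hon' (Sum.inl i') (Sum.inl j')
          simp only [Sum.elim_inl, Sum.inl.injEq] at h
          rw [Submodule.coe_inner] at h
          rw [h]
          simp [Fin.succ_inj]
    have hFJ : ∀ i j : Fin (k' + 1),
        ⟪fc i, Jl (fc j)⟫ = 0 := by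
      intro i j
      refine Fin.cases ?_ ?_ i
      · refine Fin.cases ?_ ?_ j
        · simpa [hfc] using huJu
        · intro j'
          simp only [hfc, Fin.cons_zero, Fin.cons_succ]
          exact c1 ⟨Jl (f' j' : V), hJW _ (f' j').2⟩
      · intro i'
        refine Fin.cases ?_ ?_ j
        · simp only [hfc, Fin.cons_zero, Fin.cons_succ]
          rw [real_inner_comm]
          exact c2 (f' i')
        · intro j'
          simp only [hfc, Fin.cons_succ]
          have h := hon' (Sum.inl i') (Sum.inr j')
          simp only [Sum.elim_inl, Sum.elim_inr, reduceCtorEq, if_false] at h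
          rw [Submodule.coe_inner, hcoeJ] at h
          exact h
    rintro (i | i) (j | j)
    · simp only [Sum.elim_inl]
      rw [hF]
      simp
    · simp only [Sum.elim_inl, Sum.elim_inr]
      rw [hFJ]
      simp
    · simp only [Sum.elim_inl, Sum.elim_inr]
      rw [real_inner_comm, hFJ]
      simp
    · simp only [Sum.elim_inr]
      rw [hJi, hF]
      simp
  · -- eigenvector property
    intro i
    refine Fin.cases ?_ ?_ i
    · simpa [hfc] using hTu
    · intro j
      simp only [hfc, Fin.cons_succ]
      have h := hTf' j
      have h2 := congrArg (Subtype.val : W → V) h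
      rw [hcoeT] at h2
      simpa using h2

/-- Hamiltonian-structured eigendecomposition of `[[A, B],[B, -A]]` for symmetric `A, B`. -/
theorem stmt0 (n : ℕ) (A B : Matrix (Fin n) (Fin n) ℝ)
    (hA : Aᵀ = A) (hB : Bᵀ = B) :
    ∃ (θ : Fin n → ℝ) (U : Matrix (Fin n ⊕ Fin n) (Fin n ⊕ Fin n) ℝ),
      (∀ j, 0 ≤ θ j) ∧
      Uᵀ * U = 1 ∧
      (∀ j : Fin n, Uᵀ (Sum.inr j) =
        (Matrix.fromBlocks (0 : Matrix (Fin n) (Fin n) ℝ) (-1) 1 0).mulVec (Uᵀ (Sum.inl j))) ∧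
      Matrix.fromBlocks A B B (-A) =
        U * Matrix.fromBlocks (Matrix.diagonal θ) 0 0 (-(Matrix.diagonal θ)) * Uᵀ := by
  classical
  set Mm : Matrix (Fin n ⊕ Fin n) (Fin n ⊕ Fin n) ℝ := fromBlocks A B B (-A) with hMm
  set Jm : Matrix (Fin n ⊕ Fin n) (Fin n ⊕ Fin n) ℝ := fromBlocks 0 (-1) 1 0 with hJm
  have hMsym : Mmᵀ = Mm := by
    rw [hMm, fromBlocks_transpose, hA, hB, transpose_neg, hA]
  have hJO : Jmᵀ * Jm = 1 := by
    rw [hJm, fromBlocks_transpose, fromBlocks_multiply, ← fromBlocks_one]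
    congr 1 <;> simp
  have hJ2 : Jm * Jm = (-1 : Matrix (Fin n ⊕ Fin n) (Fin n ⊕ Fin n) ℝ) := by
    rw [hJm, fromBlocks_multiply, ← fromBlocks_one, fromBlocks_neg]
    congr 1 <;> simp
  have hanti : Mm * Jm = -(Jm * Mm) := by
    rw [hMm, hJm, fromBlocks_multiply, fromBlocks_multiply, fromBlocks_neg]
    congr 1 <;> simp
  set T : EuclideanSpace ℝ (Fin n ⊕ Fin n) →ₗ[ℝ] EuclideanSpace ℝ (Fin n ⊕ Fin n) :=
    Matrix.toEuclideanLin Mm with hTdef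
  set Jl : EuclideanSpace ℝ (Fin n ⊕ Fin n) →ₗ[ℝ] EuclideanSpace ℝ (Fin n ⊕ Fin n) :=
    Matrix.toEuclideanLin Jm with hJldef
  have happ : ∀ (P : Matrix (Fin n ⊕ Fin n) (Fin n ⊕ Fin n) ℝ)
      (x : EuclideanSpace ℝ (Fin n ⊕ Fin n)) (i),
      Matrix.toEuclideanLin P x i = (P *ᵥ fun k => x k) i := fun P x i => rfl
  have hinner : ∀ x y : EuclideanSpace ℝ (Fin n ⊕ Fin n),
      ⟪x, y⟫ = ∑ i, x i * y i := by
    intro x y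
    rw [PiLp.inner_apply]
    simp [RCLike.inner_apply]
    congr 1 <;> exact Finset.sum_congr rfl fun _ _ => mul_comm _ _
  have hmv : ∀ (P : Matrix (Fin n ⊕ Fin n) (Fin n ⊕ Fin n) ℝ)
      (x y : EuclideanSpace ℝ (Fin n ⊕ Fin n)),
      ⟪Matrix.toEuclideanLin P x, y⟫ = ((P *ᵥ fun k => x k) ⬝ᵥ fun k => y k) := by
    intro P x y
    rw [hinner]
    simp only [happ]
    rfl
  have hmv2 : ∀ (P : Matrix (Fin n ⊕ Fin n) (Fin n ⊕ Fin n) ℝ)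
      (x y : EuclideanSpace ℝ (Fin n ⊕ Fin n)),
      ⟪x, Matrix.toEuclideanLin P y⟫ = ((Pᵀ *ᵥ fun k => x k) ⬝ᵥ fun k => y k) := by
    intro P x y
    rw [hinner]
    simp only [happ]
    rw [show (∑ i, x i * (P *ᵥ fun k => y k) i) = ((fun k => x k) ⬝ᵥ (P *ᵥ fun k => y k)) from rfl,
      dotProduct_mulVec, ← mulVec_transpose]
  -- hypotheses of the key lemma
  have hTsym : ∀ x y : EuclideanSpace ℝ (Fin n ⊕ Fin n), ⟪T x, y⟫ = ⟪x, T y⟫ := by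
    intro x y
    rw [hTdef, hmv, hmv2, hMsym]
  have hJinn : ∀ x y : EuclideanSpace ℝ (Fin n ⊕ Fin n), ⟪Jl x, Jl y⟫ = ⟪x, y⟫ := by
    intro x y
    rw [hJldef, hmv2, show ((fun k => Matrix.toEuclideanLin Jm x k) = (Jm *ᵥ fun k => x k))
      from funext fun k => happ Jm x k, mulVec_mulVec, hJO, one_mulVec, hinner]
    rfl
  have hext : ∀ x y : EuclideanSpace ℝ (Fin n ⊕ Fin n), (∀ i, x i = y i) → x = y := by
    intro x y h
    exact PiLp.ext h
  have hJJ : ∀ x : EuclideanSpace ℝ (Fin n ⊕ Fin n), Jl (Jl x) = -x := by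
    intro x
    apply hext
    intro i
    rw [hJldef, happ, show ((fun k => Matrix.toEuclideanLin Jm x k) = (Jm *ᵥ fun k => x k))
      from funext fun k => happ Jm x k, mulVec_mulVec, hJ2, neg_mulVec, one_mulVec]
    rfl
  have hTJl : ∀ x : EuclideanSpace ℝ (Fin n ⊕ Fin n), T (Jl x) = -Jl (T x) := by
    intro x
    apply hext
    intro i
    rw [hTdef, hJldef, happ, show ((fun k => Matrix.toEuclideanLin Jm x k) = (Jm *ᵥ fun k => x k))
      from funext fun k => happ Jm x k, mulVec_mulVec, hanti, neg_mulVec, ← mulVec_mulVec]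
    show _ = (-(Matrix.toEuclideanLin Jm (Matrix.toEuclideanLin Mm x))) i
    rw [show ((-(Matrix.toEuclideanLin Jm (Matrix.toEuclideanLin Mm x))) i
      = -((Matrix.toEuclideanLin Jm (Matrix.toEuclideanLin Mm x)) i)) from rfl, happ,
      show ((fun k => Matrix.toEuclideanLin Mm x k) = (Mm *ᵥ fun k => x k))
      from funext fun k => happ Mm x k]
    rfl
  -- apply the key lemma
  have hfr : finrank ℝ (EuclideanSpace ℝ (Fin n ⊕ Fin n)) = 2 * n := by
    simp [finrank_euclideanSpace]
    ring
  obtain ⟨k, θ, f, hk, hθ, hon, hTf⟩ :=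
    key (2 * n) (EuclideanSpace ℝ (Fin n ⊕ Fin n)) T Jl hfr hTsym hJinn hJJ hTJl
  have hkn : k = n := by omega
  subst hkn
  set g : Fin k ⊕ Fin k → EuclideanSpace ℝ (Fin k ⊕ Fin k) :=
    Sum.elim f (fun i => Jl (f i)) with hg
  set U : Matrix (Fin k ⊕ Fin k) (Fin k ⊕ Fin k) ℝ := Matrix.of fun i a => g a i with hU
  have hUtU : Uᵀ * U = 1 := by
    ext a b
    rw [Matrix.mul_apply, Matrix.one_apply]
    have h := (orthonormal_iff_ite.mp hon) a b
    rw [hinner] at h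
    simpa [hU, Matrix.transpose_apply, Matrix.of_apply] using h
  refine ⟨θ, U, hθ, hUtU, ?_, ?_⟩
  · intro j
    funext i
    show U i (Sum.inr j) = (Jm *ᵥ fun k => U k (Sum.inl j)) i
    simp only [hU, Matrix.of_apply, hg, Sum.elim_inl, Sum.elim_inr, hJldef]
    rw [happ]
  · have hD : fromBlocks (diagonal θ) 0 0 (-(diagonal θ)) =
        diagonal (Sum.elim θ fun i => -θ i) := by
      rw [← Matrix.fromBlocks_diagonal]
      congr 1
      simp [Matrix.diagonal_neg]
    have hUU : U * Uᵀ = 1 := mul_eq_one_comm.mp hUtU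
    have hMU : Mm * U = U * diagonal (Sum.elim θ fun i => -θ i) := by
      ext i a
      rw [Matrix.mul_diagonal]
      have hcol : (Mm * U) i a = (T (g a)) i := by
        rw [hTdef, happ, Matrix.mul_apply]
        simp [Matrix.mulVec, dotProduct, hU]
      rw [hcol]
      rcases a with j | j
      · simp only [hg, Sum.elim_inl]
        rw [hTf j]
        show (θ j • f j) i = U i (Sum.inl j) * θ j
        rw [PiLp.smul_apply, smul_eq_mul, mul_comm]
        rfl
      · simp only [hg, Sum.elim_inr]
        rw [hTJl (f j), hTf j, Jl.map_smul]
        show (-(θ j • Jl (f j))) i = U i (Sum.inr j) * -θ j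
        rw [PiLp.neg_apply, PiLp.smul_apply, smul_eq_mul]
        show -(θ j * g (Sum.inr j) i) = U i (Sum.inr j) * -θ j
        rw [show U i (Sum.inr j) = g (Sum.inr j) i from rfl]
        ring
    calc Mm = Mm * (U * Uᵀ) := by rw [hUU, Matrix.mul_one]
      _ = (Mm * U) * Uᵀ := by rw [Matrix.mul_assoc]
      _ = U * diagonal (Sum.elim θ fun i => -θ i) * Uᵀ := by rw [hMU]
      _ = U * fromBlocks (diagonal θ) 0 0 (-(diagonal θ)) * Uᵀ := by rw [hD]
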